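/- Let F be a field of characteristic zero, λ2, λ3 ∈ F \ {0,1} with λ2 ≠ λ3 and λ2λ3 ≠ 1, and set λ1 = λ2λ3, L1 = λ1λ2λ3, L2 = λ1λ2+λ2λ3+λ1λ3+λ1λ2λ3, L3 = λ1+λ2+λ3+λ1λ2+λ2λ3+λ1λ3, L4 = 1+λ1+λ2+λ3. Let B(W,X,Y,Z) be the determinant of the 4×4 matrix [[0, L1W, −Z, Y],[L1W, 2L2W+2Z, L3W−Y, X],[−Z, L3W−Y, 2L4W−2X, W],[Y, X, W, 0]]. Then there exists a nonzero c ∈ F such that, identically in Z00, Z01, Z10, Z11 ∈ F, substituting W = Z01 − Z10 − Z11, X = −(1−λ2)(1−λ3)Z00 + (1+λ2λ3)Z01 − (λ2+λ3)Z10, Y = λ2λ3(Z01 − Z10 + Z11), Z = −λ2λ3((1−λ2)(1−λ3)Z00 + (1+λ2λ3)Z01 − (λ2+λ3)Z10) yields B(W,X,Y,Z) = c·Q_{V0}(Z00, Z01, Z10, Z11), where Q_{V0} is formed with Λ1Λ2 = ((λ2+λ3)²−4λ2λ3)/((1−λ2)²(1−λ3)²) and Λ1+Λ2 = −2(λ2+λ3)/((1−λ2)(1−λ3)).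 -/

import Mathlib

/-- The defining quartic polynomial of the surface `V₀` in `ℙ³`, with elliptic moduli
`Λ₁, Λ₂`. -/
def QV0 {F : Type*} [Field F] (L1 L2 Z00 Z01 Z10 Z11 : F) : F :=
  Z00 ^ 4 + (1 - L1) * (1 - L2) * Z01 ^ 4 + L1 * L2 * Z10 ^ 4
    + L1 * L2 * (1 - L1) * (1 - L2) * Z11 ^ 4
    - (2 - L1 - L2) * (Z00 ^ 2 * Z01 ^ 2 + L1 * L2 * (Z10 ^ 2 * Z11 ^ 2))
    - (2 * (L1 * L2) - L1 - L2) * (Z00 ^ 2 * Z11 ^ 2 + Z01 ^ 2 * Z10 ^ 2)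
    - (L1 + L2) * (Z00 ^ 2 * Z10 ^ 2 + (1 - L1) * (1 - L2) * (Z01 ^ 2 * Z11 ^ 2))

/-- The Baker determinantal quartic for the genus-two curve with Rosenhain roots
`e1, e2, e3`: determinant of the displayed 4×4 matrix in `W, X, Y, Z`. -/
def bakerDet {F : Type*} [Field F] (e1 e2 e3 W X Y Z : F) : F :=
  let L1 := e1 * e2 * e3
  let L2 := e1 * e2 + e2 * e3 + e1 * e3 + e1 * e2 * e3
  let L3 := e1 + e2 + e3 + e1 * e2 + e2 * e3 + e1 * e3
  let L4 := 1 + e1 + e2 + e3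
  Matrix.det !![(0 : F), L1 * W, -Z, Y;
                L1 * W, 2 * L2 * W + 2 * Z, L3 * W - Y, X;
                -Z, L3 * W - Y, 2 * L4 * W - 2 * X, W;
                Y, X, W, 0]

private lemma det_fin_four {F : Type*} [Field F]
    (a00 a01 a02 a03 a10 a11 a12 a13 a20 a21 a22 a23 a30 a31 a32 a33 : F) :
    Matrix.det !![a00, a01, a02, a03; a10, a11, a12, a13;
                  a20, a21, a22, a23; a30, a31, a32, a33] =
      a00 * (a11 * (a22 * a33 - a23 * a32) - a12 * (a21 * a33 - a23 * a31)
          + a13 * (a21 * a32 - a22 * a31))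
      - a01 * (a10 * (a22 * a33 - a23 * a32) - a12 * (a20 * a33 - a23 * a30)
          + a13 * (a20 * a32 - a22 * a30))
      + a02 * (a10 * (a21 * a33 - a23 * a31) - a11 * (a20 * a33 - a23 * a30)
          + a13 * (a20 * a31 - a21 * a30))
      - a03 * (a10 * (a21 * a32 - a22 * a31) - a11 * (a20 * a32 - a22 * a30)
          + a12 * (a20 * a31 - a21 * a30)) := by
  simp [Matrix.det_succ_row_zero, Fin.sum_univ_succ, Fin.succAbove]
  ring

set_option maxHeartbeats 2000000 in
private lemma baker_key {F : Type*} [Field F] (l2 l3 Z00 Z01 Z10 Z11 : F) :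
    bakerDet (l2 * l3) l2 l3
        (Z01 - Z10 - Z11)
        (-((1 - l2) * (1 - l3)) * Z00 + (1 + l2 * l3) * Z01 - (l2 + l3) * Z10)
        (l2 * l3 * (Z01 - Z10 + Z11))
        (-(l2 * l3) * ((1 - l2) * (1 - l3) * Z00 + (1 + l2 * l3) * Z01 - (l2 + l3) * Z10))
    = l2 ^ 2 * l3 ^ 2 *
      (((1-l2)*(1-l3))^4 * (Z00^4 + Z01^4 - 2*Z00^2*Z01^2)
        + ((1-l2)*(1-l3))^3 * (-2*(l2+l3)) *
            (-Z01^4 + Z00^2*Z01^2 + Z00^2*Z11^2 + Z01^2*Z10^2 - Z00^2*Z10^2 - Z01^2*Z11^2)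
        + ((1-l2)*(1-l3))^2 * ((l2+l3)^2 - 4*(l2*l3)) *
            (Z01^4 + Z10^4 + Z11^4 - 2*Z10^2*Z11^2 - 2*Z00^2*Z11^2 - 2*Z01^2*Z10^2)
        + ((1-l2)*(1-l3))^2 * (-2*(l2+l3))^2 * (Z01^2*Z11^2)
        + ((l2+l3)^2 - 4*(l2*l3))^2 * Z11^4
        + ((1-l2)*(1-l3)) * ((l2+l3)^2 - 4*(l2*l3)) * (-2*(l2+l3)) *
            (-Z11^4 + Z10^2*Z11^2 - Z01^2*Z11^2)) := by
  unfold bakerDet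
  rw [det_fin_four]
  ring

set_option maxHeartbeats 2000000 in
/-- the displayed linear change of coordinates identifies the Baker
determinantal quartic of the genus-two curve with Rosenhain roots
`(λ₁ = λ₂λ₃, λ₂, λ₃)` with the quartic `Q_{V₀}` (formed with the displayed values of
`Λ₁Λ₂` and `Λ₁+Λ₂`) up to a nonvanishing scalar factor. -/
theorem stmt_5 (F : Type*) [Field F] [CharZero F] (l2 l3 L1 L2 : F)
    (hl2 : l2 ≠ 0) (hl2' : l2 ≠ 1) (hl3 : l3 ≠ 0) (hl3' : l3 ≠ 1)
    (hne : l2 ≠ l3) (hprod : l2 * l3 ≠ 1)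
    (hP : L1 * L2 = ((l2 + l3) ^ 2 - 4 * (l2 * l3)) / ((1 - l2) ^ 2 * (1 - l3) ^ 2))
    (hS : L1 + L2 = -(2 * (l2 + l3)) / ((1 - l2) * (1 - l3))) :
    ∃ c : F, c ≠ 0 ∧ ∀ Z00 Z01 Z10 Z11 : F,
      bakerDet (l2 * l3) l2 l3
        (Z01 - Z10 - Z11)
        (-((1 - l2) * (1 - l3)) * Z00 + (1 + l2 * l3) * Z01 - (l2 + l3) * Z10)
        (l2 * l3 * (Z01 - Z10 + Z11))
        (-(l2 * l3) * ((1 - l2) * (1 - l3) * Z00 + (1 + l2 * l3) * Z01 - (l2 + l3) * Z10))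
      = c * QV0 L1 L2 Z00 Z01 Z10 Z11 := by
  have h2 : (1 : F) - l2 ≠ 0 := sub_ne_zero.mpr (Ne.symm hl2')
  have h3 : (1 : F) - l3 ≠ 0 := sub_ne_zero.mpr (Ne.symm hl3')
  have hPt : L1 * L2 * ((1 - l2) ^ 2 * (1 - l3) ^ 2) = (l2 + l3) ^ 2 - 4 * (l2 * l3) := by
    rw [hP]; field_simp
  have hSt : (L1 + L2) * ((1 - l2) * (1 - l3)) = -(2 * (l2 + l3)) := by
    rw [hS]; field_simp
  refine ⟨l2 ^ 2 * l3 ^ 2 * (1 - l2) ^ 4 * (1 - l3) ^ 4, by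
    exact mul_ne_zero (mul_ne_zero (mul_ne_zero (pow_ne_zero _ hl2) (pow_ne_zero _ hl3))
      (pow_ne_zero _ h2)) (pow_ne_zero _ h3), ?_⟩
  intro Z00 Z01 Z10 Z11
  rw [baker_key]
  unfold QV0
  linear_combination
    (-(l2 ^ 2 * l3 ^ 2) * (((1-l2)*(1-l3))^3 *
        (-Z01^4 + Z00^2*Z01^2 + Z00^2*Z11^2 + Z01^2*Z10^2 - Z00^2*Z10^2 - Z01^2*Z11^2)
      + ((1-l2)*(1-l3))^2 * (Z01^2*Z11^2) *
          ((L1 + L2) * ((1-l2)*(1-l3)) + (-2*(l2+l3)))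
      + ((1-l2)*(1-l3)) * (-Z11^4 + Z10^2*Z11^2 - Z01^2*Z11^2) *
          ((l2+l3)^2 - 4*(l2*l3)))) * hSt
    + (-(l2 ^ 2 * l3 ^ 2) * (((1-l2)*(1-l3))^2 *
        (Z01^4 + Z10^4 + Z11^4 - 2*Z10^2*Z11^2 - 2*Z00^2*Z11^2 - 2*Z01^2*Z10^2)
      + Z11^4 * ((L1 * L2) * ((1-l2)*(1-l3))^2 + ((l2+l3)^2 - 4*(l2*l3)))
      + ((1-l2)*(1-l3)) * (-Z11^4 + Z10^2*Z11^2 - Z01^2*Z11^2) *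
          ((L1 + L2) * ((1-l2)*(1-l3))))) * hPt
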